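/- Every eigenvalue λ of the generalized eigenvalue problem Ãe = λ C̃e is positive, and every generalized eigenvalue has geometric multiplicity at most two. -/

import Mathlib

open MeasureTheory

/-- Equispaced nodes `-1 + 2k/n` in `[-1,1]`. -/
noncomputable def femNode (n : ℕ) (k : Fin (n + 1)) : ℝ := -1 + 2 * (k : ℝ) / (n : ℝ)

/-- Lagrange basis polynomial of degree `n` at the equispaced nodes. -/
noncomputable def lagrangeBasis (n : ℕ) (l : Fin (n + 1)) (x : ℝ) : ℝ :=
  ∏ k ∈ Finset.univ.erase l, (x - femNode n k) / (femNode n l - femNode n k)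

/-- Local stiffness matrix `A_{kl} = ∫_{-1}^{1} e_k' e_l'`. -/
noncomputable def stiffMatrix (n : ℕ) : Matrix (Fin (n + 1)) (Fin (n + 1)) ℝ :=
  fun k l => ∫ x in (-1 : ℝ)..1, deriv (lagrangeBasis n k) x * deriv (lagrangeBasis n l) x

/-- Local mass matrix `C_{kl} = ∫_{-1}^{1} e_k e_l`. -/
noncomputable def massMatrix (n : ℕ) : Matrix (Fin (n + 1)) (Fin (n + 1)) ℝ :=
  fun k l => ∫ x in (-1 : ℝ)..1, lagrangeBasis n k x * lagrangeBasis n l x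

/-- Embedding of the interior indices `1,…,n-1` into `0,…,n`. -/
def interiorEmb (n : ℕ) : Fin (n - 1) → Fin (n + 1) := fun i => ⟨(i : ℕ) + 1, by omega⟩

/-- Interior stiffness submatrix `Ã`. -/
noncomputable def Atil (n : ℕ) : Matrix (Fin (n - 1)) (Fin (n - 1)) ℝ :=
  (stiffMatrix n).submatrix (interiorEmb n) (interiorEmb n)

/-- Interior mass submatrix `C̃`. -/
noncomputable def Ctil (n : ℕ) : Matrix (Fin (n - 1)) (Fin (n - 1)) ℝ :=
  (massMatrix n).submatrix (interiorEmb n) (interiorEmb n)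

section Aux

open Polynomial Module LinearMap

/-- The Lagrange basis as an actual polynomial. -/
noncomputable def femPoly (n : ℕ) (l : Fin (n + 1)) : Polynomial ℝ :=
  Lagrange.basis Finset.univ (femNode n) l

lemma lagrangeBasis_eq (n : ℕ) (l : Fin (n + 1)) :
    lagrangeBasis n l = fun x => (femPoly n l).eval x := by
  funext x
  simp only [lagrangeBasis, femPoly, Lagrange.basis, Lagrange.basisDivisor, eval_prod,
    eval_mul, eval_C, eval_sub, eval_X]
  refine Finset.prod_congr rfl fun k _ => ?_
  rw [div_eq_inv_mul, mul_comm]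

lemma femNode_injective (n : ℕ) (hn : n ≠ 0) : Function.Injective (femNode n) := by
  intro a b h
  have hn' : (n : ℝ) ≠ 0 := Nat.cast_ne_zero.mpr hn
  have : (a : ℝ) = (b : ℝ) := by
    unfold femNode at h
    field_simp at h
    linarith
  exact Fin.ext (Nat.cast_injective this)

lemma femNode_zero (n : ℕ) : femNode n 0 = -1 := by simp [femNode]

lemma femNode_last (n : ℕ) (hn : n ≠ 0) : femNode n ⟨n, by omega⟩ = 1 := by
  have hn' : (n : ℝ) ≠ 0 := Nat.cast_ne_zero.mpr hn
  unfold femNode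
  field_simp
  ring

/-- Integration over `[-1,1]` as a linear functional on polynomials. -/
noncomputable def polyInt : Polynomial ℝ →ₗ[ℝ] ℝ where
  toFun p := ∫ x in (-1 : ℝ)..1, p.eval x
  map_add' p q := by
    simp only [eval_add]
    exact intervalIntegral.integral_add ((p.continuous).intervalIntegrable _ _)
      ((q.continuous).intervalIntegrable _ _)
  map_smul' a p := by
    simp only [eval_smul, smul_eq_mul, RingHom.id_apply]
    simp_rw [← smul_eq_mul, intervalIntegral.integral_smul]

lemma polyInt_def (p : Polynomial ℝ) : polyInt p = ∫ x in (-1 : ℝ)..1, p.eval x := rfl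

lemma polyInt_pos_sq {p : Polynomial ℝ} (hp : p ≠ 0) : 0 < polyInt (p * p) := by
  obtain ⟨c, hc, hcr⟩ := ((Set.Icc_infinite (by norm_num : (-1 : ℝ) < 1)).diff
    (p.finite_setOf_isRoot hp)).nonempty
  rw [polyInt_def]
  apply intervalIntegral.integral_pos (by norm_num)
  · exact ((p * p).continuous).continuousOn
  · intro x _; simp only [eval_mul]; exact mul_self_nonneg _
  · refine ⟨c, hc, ?_⟩
    simp only [eval_mul]
    exact (mul_self_nonneg _).lt_of_ne' (mul_self_ne_zero.mpr hcr)

lemma polyInt_derivative (p : Polynomial ℝ) :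
    polyInt (derivative p) = p.eval 1 - p.eval (-1) := by
  rw [polyInt_def]
  rw [show (fun x => (derivative p).eval x) = deriv (fun x => p.eval x) by
    funext x; rw [Polynomial.deriv]]
  exact intervalIntegral.integral_deriv_eq_sub (fun x _ => p.differentiableAt) (by
    rw [show deriv (fun x => p.eval x) = fun x => (derivative p).eval x by
      funext x; rw [Polynomial.deriv]]
    exact ((derivative p).continuous).intervalIntegrable _ _)

/-- The interior combination `u = ∑ eᵢ φ_{i+1}`. -/
noncomputable def Pu (n : ℕ) (e : Fin (n - 1) → ℝ) : Polynomial ℝ :=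
  ∑ i, e i • femPoly n (interiorEmb n i)

lemma massMatrix_eq (n : ℕ) (k l : Fin (n + 1)) :
    massMatrix n k l = polyInt (femPoly n k * femPoly n l) := by
  rw [polyInt_def, massMatrix]
  simp_rw [lagrangeBasis_eq, eval_mul]

lemma stiffMatrix_eq (n : ℕ) (k l : Fin (n + 1)) :
    stiffMatrix n k l = polyInt (derivative (femPoly n k) * derivative (femPoly n l)) := by
  rw [polyInt_def, stiffMatrix]
  have h : ∀ m : Fin (n + 1),
      deriv (lagrangeBasis n m) = fun x => (derivative (femPoly n m)).eval x := by
    intro m; funext x; rw [lagrangeBasis_eq]; exact Polynomial.deriv _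
  simp_rw [h, eval_mul]

lemma Pu_derivative (n : ℕ) (e : Fin (n - 1) → ℝ) :
    derivative (Pu n e) = ∑ i, e i • derivative (femPoly n (interiorEmb n i)) := by
  rw [Pu, map_sum]; simp

lemma Ctil_mulVec (n : ℕ) (e : Fin (n - 1) → ℝ) (j : Fin (n - 1)) :
    (Ctil n).mulVec e j = polyInt (femPoly n (interiorEmb n j) * Pu n e) := by
  rw [Pu, Finset.mul_sum, map_sum, Matrix.mulVec, dotProduct]
  refine Finset.sum_congr rfl fun i _ => ?_
  rw [Ctil, Matrix.submatrix_apply, massMatrix_eq, mul_smul_comm, LinearMap.map_smul]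
  simp [mul_comm]

lemma Atil_mulVec (n : ℕ) (e : Fin (n - 1) → ℝ) (j : Fin (n - 1)) :
    (Atil n).mulVec e j
      = polyInt (derivative (femPoly n (interiorEmb n j)) * derivative (Pu n e)) := by
  rw [Pu_derivative, Finset.mul_sum, map_sum, Matrix.mulVec, dotProduct]
  refine Finset.sum_congr rfl fun i _ => ?_
  rw [Atil, Matrix.submatrix_apply, stiffMatrix_eq, mul_smul_comm, LinearMap.map_smul]
  simp [mul_comm]

lemma quad_sum (n : ℕ) (e : Fin (n - 1) → ℝ) (g : Fin (n - 1) → Polynomial ℝ)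
    (q : Polynomial ℝ) :
    ∑ j, e j * polyInt (g j * q) = polyInt ((∑ j, e j • g j) * q) := by
  rw [Finset.sum_mul, map_sum]
  refine Finset.sum_congr rfl fun j _ => ?_
  rw [smul_mul_assoc, LinearMap.map_smul]; simp

lemma Pu_eval_interior (n : ℕ) (hn : 2 ≤ n) (e : Fin (n - 1) → ℝ) (i : Fin (n - 1)) :
    (Pu n e).eval (femNode n (interiorEmb n i)) = e i := by
  have hinj := femNode_injective n (by omega)
  rw [Pu, eval_finset_sum]
  rw [Finset.sum_eq_single i]
  · simp [femPoly, Lagrange.eval_basis_self (hinj.injOn) (Finset.mem_univ _)]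
  · intro b _ hb
    have : interiorEmb n b ≠ interiorEmb n i := by
      simp only [interiorEmb, ne_eq, Fin.mk.injEq]
      exact fun h => hb (Fin.ext (by omega))
    simp [femPoly, Lagrange.eval_basis_of_ne this (Finset.mem_univ _)]
  · simp

lemma femPoly_eval_of_ne (n : ℕ) (hn : 2 ≤ n) (i : Fin (n - 1)) (k : Fin (n + 1))
    (hk : (k : ℕ) = 0 ∨ (k : ℕ) = n) :
    (femPoly n (interiorEmb n i)).eval (femNode n k) = 0 := by
  have hne : interiorEmb n i ≠ k := by
    have := i.isLt
    simp only [interiorEmb, ne_eq]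
    intro h
    have : (i : ℕ) + 1 = (k : ℕ) := by rw [← h]
    omega
  simp [femPoly, Lagrange.eval_basis_of_ne hne (Finset.mem_univ _)]

lemma Pu_eval_boundary (n : ℕ) (hn : 2 ≤ n) (e : Fin (n - 1) → ℝ) (k : Fin (n + 1))
    (hk : (k : ℕ) = 0 ∨ (k : ℕ) = n) : (Pu n e).eval (femNode n k) = 0 := by
  rw [Pu, eval_finset_sum]
  refine Finset.sum_eq_zero fun i _ => ?_
  rw [eval_smul, femPoly_eval_of_ne n hn i k hk, smul_zero]

lemma Pu_ne_zero (n : ℕ) (hn : 2 ≤ n) {e : Fin (n - 1) → ℝ} (he : e ≠ 0) : Pu n e ≠ 0 := by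
  intro h
  apply he
  funext i
  have := Pu_eval_interior n hn e i
  rw [h] at this
  simpa using this.symm

lemma femPoly_natDegree_le (n : ℕ) (l : Fin (n + 1)) : (femPoly n l).natDegree ≤ n := by
  rw [femPoly, Lagrange.basis]
  refine le_trans (Polynomial.natDegree_prod_le _ _) ?_
  refine le_trans (Finset.sum_le_card_nsmul _ _ 1 fun k _ => ?_) ?_
  · unfold Lagrange.basisDivisor
    refine le_trans (natDegree_mul_le) ?_
    simp [natDegree_X_sub_C]
  · simp [Finset.card_erase_of_mem]

lemma femPoly_mem (n : ℕ) (l : Fin (n + 1)) : femPoly n l ∈ degreeLT ℝ (n + 1) := by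
  rw [Polynomial.mem_degreeLT]
  refine lt_of_le_of_lt degree_le_natDegree ?_
  exact_mod_cast Nat.lt_succ_of_le (femPoly_natDegree_le n l)

lemma Pu_mem (n : ℕ) (e : Fin (n - 1) → ℝ) : Pu n e ∈ degreeLT ℝ (n + 1) :=
  Submodule.sum_mem _ fun i _ => Submodule.smul_mem _ _ (femPoly_mem n _)

/-- `e ↦ u` as a linear map into `P_n`. -/
noncomputable def Phi (n : ℕ) : (Fin (n - 1) → ℝ) →ₗ[ℝ] degreeLT ℝ (n + 1) where
  toFun e := ⟨Pu n e, Pu_mem n e⟩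
  map_add' e f := by
    ext1; simp [Pu, add_smul, Finset.sum_add_distrib]
  map_smul' a e := by
    ext1; simp [Pu, Finset.smul_sum, smul_smul]

/-- `u ↦ u'' + λu` as a linear endomorphism of `P_n`. -/
noncomputable def Wmap (n : ℕ) (lam : ℝ) : degreeLT ℝ (n + 1) →ₗ[ℝ] degreeLT ℝ (n + 1) where
  toFun p := ⟨derivative (derivative (p : Polynomial ℝ)) + lam • (p : Polynomial ℝ), by
    refine Submodule.add_mem _ ?_ (Submodule.smul_mem _ _ p.2)
    rw [Polynomial.mem_degreeLT]
    exact lt_of_le_of_lt (le_trans degree_derivative_le degree_derivative_le)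
      (Polynomial.mem_degreeLT.mp p.2)⟩
  map_add' p q := by ext1; push_cast; simp only [derivative_add, smul_add]; ring
  map_smul' a p := by
    ext1; push_cast
    simp only [derivative_smul, smul_smul, RingHom.id_apply, id_eq, smul_add, mul_comm]

/-- `w ↦ (∫ w φ_j)_j` as a linear map. -/
noncomputable def Lmap (n : ℕ) : degreeLT ℝ (n + 1) →ₗ[ℝ] (Fin (n - 1) → ℝ) :=
  LinearMap.pi fun j =>
    polyInt ∘ₗ LinearMap.mulRight ℝ (femPoly n (interiorEmb n j)) ∘ₗ
      (degreeLT ℝ (n + 1)).subtype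

lemma Lmap_apply (n : ℕ) (w : degreeLT ℝ (n + 1)) (j : Fin (n - 1)) :
    Lmap n w j = polyInt ((w : Polynomial ℝ) * femPoly n (interiorEmb n j)) := rfl

noncomputable instance (n : ℕ) : FiniteDimensional ℝ (degreeLT ℝ (n + 1)) :=
  Module.Finite.equiv (Polynomial.degreeLTEquiv ℝ (n + 1)).symm

lemma finrank_degreeLT' (n : ℕ) : finrank ℝ (degreeLT ℝ (n + 1)) = n + 1 := by
  rw [(Polynomial.degreeLTEquiv ℝ (n + 1)).finrank_eq]
  simp

lemma Lmap_surj (n : ℕ) (hn : 2 ≤ n) : Function.Surjective (Lmap n) := by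
  have hinj : Function.Injective ((Lmap n) ∘ₗ (Phi n)) := by
    rw [← LinearMap.ker_eq_bot, LinearMap.ker_eq_bot']
    intro e he0
    by_contra he
    have hPu : Pu n e ≠ 0 := Pu_ne_zero n hn he
    have hq : polyInt (Pu n e * Pu n e) = 0 := by
      have := quad_sum n e (fun i => femPoly n (interiorEmb n i)) (Pu n e)
      rw [← Pu] at this
      rw [← this]
      refine Finset.sum_eq_zero fun j _ => ?_
      have hj : Lmap n (Phi n e) j = 0 := congrFun he0 j
      rw [Lmap_apply] at hj
      have hcoe : ((Phi n e : degreeLT ℝ (n + 1)) : Polynomial ℝ) = Pu n e := rfl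
      rw [hcoe, mul_comm] at hj
      rw [hj, mul_zero]
    exact absurd hq (polyInt_pos_sq hPu).ne'
  have hsur : Function.Surjective ((Lmap n) ∘ₗ (Phi n)) :=
    LinearMap.injective_iff_surjective.mp hinj
  intro c
  obtain ⟨e, he⟩ := hsur c
  exact ⟨Phi n e, he⟩

lemma finrank_ker_Lmap (n : ℕ) (hn : 2 ≤ n) : finrank ℝ (ker (Lmap n)) = 2 := by
  have h1 := LinearMap.finrank_range_add_finrank_ker (Lmap n)
  rw [LinearMap.range_eq_top.mpr (Lmap_surj n hn), finrank_top, finrank_degreeLT'] at h1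
  simp only [Module.finrank_pi, Fintype.card_fin] at h1
  omega

lemma sturm {lam : ℝ} {u : Polynomial ℝ} (h : derivative (derivative u) + lam • u = 0)
    (h1 : u.eval 1 = 0) (h2 : u.eval (-1) = 0) : u = 0 := by
  rcases eq_or_ne lam 0 with rfl | hl
  · rw [zero_smul, add_zero] at h
    have hc := eq_C_of_derivative_eq_zero h
    set c := (derivative u).coeff 0 with hcdef
    have hd : derivative (u - C c * X) = 0 := by
      rw [derivative_sub]; simp [hc]
    have hd2 := eq_C_of_derivative_eq_zero hd
    set d := (u - C c * X).coeff 0 with hddef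
    have hu : u = C c * X + C d := by
      have : u - C c * X = C d := hd2
      linear_combination this
    rw [hu] at h1 h2
    simp at h1 h2
    have hc0 : c = 0 := by linarith
    have hd0 : d = 0 := by linarith
    rw [hu, hc0, hd0]; simp
  · by_contra hu
    rcases Nat.eq_zero_or_pos u.natDegree with h0 | hpos
    · have huC : u = C (u.coeff 0) := eq_C_of_natDegree_eq_zero h0
      rw [huC] at h
      simp only [derivative_C, derivative_zero, zero_add, smul_C] at h
      have : lam • u.coeff 0 = 0 := by
        have := congrArg (fun p => Polynomial.coeff p 0) h
        simpa using this
      have : u.coeff 0 = 0 := by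
        simpa [hl] using this
      exact hu (by rw [huC, this, map_zero])
    · have hcoeff := congrArg (fun p => Polynomial.coeff p u.natDegree) h
      have hz : (derivative (derivative u)).coeff u.natDegree = 0 := by
        apply coeff_eq_zero_of_natDegree_lt
        have t1 : (derivative u).natDegree < u.natDegree :=
          natDegree_derivative_lt hpos.ne'
        have t2 : (derivative (derivative u)).natDegree ≤ (derivative u).natDegree - 1 :=
          natDegree_derivative_le _
        omega
      simp only [coeff_add, coeff_smul, coeff_zero, hz, zero_add, smul_eq_mul] at hcoeff
      have : u.coeff u.natDegree = 0 := by
        rcases mul_eq_zero.mp hcoeff with h' | h'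
        · exact absurd h' hl
        · exact h'
      exact hu (leadingCoeff_eq_zero.mp this)

end Aux

/-- Every generalized eigenvalue of `Ãe = λC̃e` is positive, and each generalized
eigenvalue has geometric multiplicity at most two. -/
theorem interior_eigenvalues_pos_mult_le_two (n : ℕ) (hn : 2 ≤ n) :
    (∀ (lam : ℝ) (e : Fin (n - 1) → ℝ), e ≠ 0 →
        (Atil n).mulVec e = lam • (Ctil n).mulVec e → 0 < lam) ∧
    (∀ lam : ℝ,
        Module.finrank ℝ (LinearMap.ker (Atil n - lam • Ctil n).mulVecLin) ≤ 2) := by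
  classical
  have hn0 : n ≠ 0 := by omega
  constructor
  · -- positivity
    intro lam e he h
    have hA : ∑ j, e j * (Atil n).mulVec e j
        = polyInt (Polynomial.derivative (Pu n e) * Polynomial.derivative (Pu n e)) := by
      calc ∑ j, e j * (Atil n).mulVec e j
          = ∑ j, e j * polyInt (Polynomial.derivative (femPoly n (interiorEmb n j)) *
              Polynomial.derivative (Pu n e)) := by
            refine Finset.sum_congr rfl fun j _ => ?_
            rw [Atil_mulVec]
        _ = polyInt ((∑ j, e j • Polynomial.derivative (femPoly n (interiorEmb n j))) *
              Polynomial.derivative (Pu n e)) := quad_sum n e _ _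
        _ = _ := by rw [← Pu_derivative]
    have hC : ∑ j, e j * (Ctil n).mulVec e j = polyInt (Pu n e * Pu n e) := by
      calc ∑ j, e j * (Ctil n).mulVec e j
          = ∑ j, e j * polyInt (femPoly n (interiorEmb n j) * Pu n e) := by
            refine Finset.sum_congr rfl fun j _ => ?_
            rw [Ctil_mulVec]
        _ = polyInt ((∑ j, e j • femPoly n (interiorEmb n j)) * Pu n e) := quad_sum n e _ _
        _ = _ := by rw [← Pu]
    have hsum : ∑ j, e j * (Atil n).mulVec e j = lam * ∑ j, e j * (Ctil n).mulVec e j := by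
      rw [h, Finset.mul_sum]
      refine Finset.sum_congr rfl fun j _ => ?_
      simp [Pi.smul_apply, smul_eq_mul]; ring
    have hunz : Pu n e ≠ 0 := Pu_ne_zero n hn he
    have hdnz : Polynomial.derivative (Pu n e) ≠ 0 := by
      intro hd
      have hCc := Polynomial.eq_C_of_derivative_eq_zero hd
      have h0 : (Pu n e).eval (femNode n 0) = 0 :=
        Pu_eval_boundary n hn e 0 (Or.inl rfl)
      rw [hCc] at h0
      simp at h0
      exact hunz (by rw [hCc, h0, map_zero])
    have hApos := polyInt_pos_sq hdnz
    have hCpos := polyInt_pos_sq hunz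
    nlinarith [hA, hC, hsum]
  · -- multiplicity ≤ 2
    intro lam
    set K := LinearMap.ker (Atil n - lam • Ctil n).mulVecLin with hK
    have hmem : ∀ x : K, (Wmap n lam) ((Phi n) (x : Fin (n - 1) → ℝ)) ∈
        LinearMap.ker (Lmap n) := by
      rintro ⟨e, hx⟩
      have hx' : (Atil n - lam • Ctil n).mulVec e = 0 := hx
      rw [LinearMap.mem_ker]
      funext j
      set u := Pu n e with hu
      set v := femPoly n (interiorEmb n j) with hv
      have hker : (Atil n).mulVec e j - lam * (Ctil n).mulVec e j = 0 := by
        have := congrFun hx' j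
        rw [Matrix.sub_mulVec, Matrix.smul_mulVec] at this
        simpa using this
      have hrel : polyInt (Polynomial.derivative v * Polynomial.derivative u)
          = lam * polyInt (v * u) := by
        rw [Atil_mulVec, Ctil_mulVec] at hker
        linarith
    -- integration by parts
      have hbd1 : v.eval 1 = 0 := by
        rw [← femNode_last n hn0]
        exact femPoly_eval_of_ne n hn j _ (Or.inr rfl)
      have hbd2 : v.eval (-1) = 0 := by
        rw [← femNode_zero n]
        exact femPoly_eval_of_ne n hn j _ (Or.inl rfl)
      have hIBP : polyInt (Polynomial.derivative (Polynomial.derivative u) * v)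
          + polyInt (Polynomial.derivative u * Polynomial.derivative v) = 0 := by
        have hftc := polyInt_derivative (Polynomial.derivative u * v)
        rw [Polynomial.derivative_mul, map_add] at hftc
        simp only [Polynomial.eval_mul, hbd1, hbd2, mul_zero] at hftc
        linarith
      have : Lmap n ((Wmap n lam) ((Phi n) e)) j = 0 := by
        rw [Lmap_apply]
        have hcoe : (((Wmap n lam) ((Phi n) e) : Polynomial.degreeLT ℝ (n + 1)) :
            Polynomial ℝ)
            = Polynomial.derivative (Polynomial.derivative u) + lam • u := rfl
        rw [hcoe, add_mul, smul_mul_assoc, map_add, LinearMap.map_smul]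
        have e1 : polyInt (Polynomial.derivative (Polynomial.derivative u) * v)
            = -(lam * polyInt (v * u)) := by
          rw [mul_comm (Polynomial.derivative u)] at hIBP
          linarith
        rw [e1, mul_comm u v]
        simp [smul_eq_mul]
      simpa using this
    let T : K →ₗ[ℝ] LinearMap.ker (Lmap n) :=
      LinearMap.codRestrict _ ((Wmap n lam) ∘ₗ (Phi n) ∘ₗ K.subtype) hmem
    have hT0 : ∀ z : K, T z = 0 → z = 0 := by
      rintro ⟨e, hx⟩ hTx
      have hpoly : Polynomial.derivative (Polynomial.derivative (Pu n e)) + lam • Pu n e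
          = 0 := by
        exact congrArg
          (fun y : LinearMap.ker (Lmap n) =>
            ((y : Polynomial.degreeLT ℝ (n + 1)) : Polynomial ℝ)) hTx
      have hb1 : (Pu n e).eval 1 = 0 := by
        rw [← femNode_last n hn0]
        exact Pu_eval_boundary n hn e _ (Or.inr rfl)
      have hb2 : (Pu n e).eval (-1) = 0 := by
        rw [← femNode_zero n]
        exact Pu_eval_boundary n hn e 0 (Or.inl rfl)
      have hu0 : Pu n e = 0 := sturm hpoly hb1 hb2
      have he0 : e = 0 := by
        funext i
        have := Pu_eval_interior n hn e i
        rw [hu0] at this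
        simpa using this.symm
      exact Subtype.ext he0
    have hTinj : Function.Injective T := by
      intro a b hab
      have := hT0 (a - b) (by rw [map_sub, hab, sub_self])
      exact sub_eq_zero.mp this
    calc Module.finrank ℝ K ≤ Module.finrank ℝ (LinearMap.ker (Lmap n)) :=
          LinearMap.finrank_le_finrank_of_injective hTinj
      _ = 2 := finrank_ker_Lmap n hn
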